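/- Let Γ be the monoid of words over a group G, and fix g_0 ∈ G with g_0 ≠ e. Define for words the sets: G_1 of words starting with a letter ≠ e, G_2 ⊆ G_1 of words both starting and ending with a letter ≠ e, and E_1 the set of words starting with e together with the empty word. For t ∈ {1,3,5} let α_t = (g_0, e^t) (the word g_0 followed by t copies of e). Define the product set A ∘ B via the fusion-rule decomposition: for words x = u·t, y = t̄·v one obtains contributions u·v and (when u,v nonempty) u∗v. Then: (i) G_2 ∘ E_1 ∩ E_1 = ∅; (ii) {α_t} ∘ G_1 and {α_s} ∘ G_1 are disjoint for t ≠ s in {1,3,5}; (iii) {α_t} ∘ G_2 ∘ {ᾱ_t} ⊆ G_2 for each t ∈ {1,3,5}. -/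

import Mathlib

/-- Involution on words: reverse and invert letters. -/
def wordInv {G : Type*} [Group G] (w : List G) : List G := (w.map (·⁻¹)).reverse

/-- Fusion of two words: multiply the last letter of `u` with the first letter of `v`. -/
def fuse {G : Type*} [Group G] (u v : List G) : List G :=
  match u.getLast?, v with
  | some a, b :: t => u.dropLast ++ (a * b) :: t
  | _, _ => u ++ v

/-- `γ` appears in the fusion-rule expansion of `b_x ⊗ b_y`, i.e. there is a
decomposition `x = u·t`, `y = t̄·v` with `γ = u·v` or (for `u, v` nonempty) `γ = u∗v`. -/
def inProd {G : Type*} [Group G] (x y γ : List G) : Prop :=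
  ∃ u t v : List G, x = u ++ t ∧ y = wordInv t ++ v ∧
    (γ = u ++ v ∨ (u ≠ [] ∧ v ≠ [] ∧ γ = fuse u v))

/-- The product set `A ∘ B` of two sets of words. -/
def circ {G : Type*} [Group G] (A B : Set (List G)) : Set (List G) :=
  {γ | ∃ x ∈ A, ∃ y ∈ B, inProd x y γ}

/-- Words starting with `e`, together with the empty word. -/
def E1 (G : Type*) [Group G] : Set (List G) := {w | w = [] ∨ w.head? = some 1}

/-- Words starting with a letter `≠ e`. -/
def G1 (G : Type*) [Group G] : Set (List G) := {w | ∃ a, w.head? = some a ∧ a ≠ 1}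

/-- Words starting and ending with a letter `≠ e`. -/
def G2 (G : Type*) [Group G] : Set (List G) :=
  {w | (∃ a, w.head? = some a ∧ a ≠ 1) ∧ (∃ b, w.getLast? = some b ∧ b ≠ 1)}

/-- Words starting with `e` that contain at least one letter `≠ e`. -/
def E3 (G : Type*) [Group G] : Set (List G) := {w | w.head? = some 1 ∧ ∃ a ∈ w, a ≠ 1}

lemma fuse_cons {G : Type*} [Group G] {u : List G} {a : G} (h : u.getLast? = some a)
    (b : G) (tl : List G) : fuse u (b :: tl) = u.dropLast ++ (a * b) :: tl := by
  unfold fuse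
  rw [h]

lemma head?_wordInv_append {G : Type*} [Group G] {t : List G} (ht : t ≠ []) (v : List G) :
    (wordInv t ++ v).head? = t.getLast?.map (·⁻¹) := by
  have h2 : wordInv t ≠ [] := by simp [wordInv, ht]
  rw [List.head?_append_of_ne_nil _ h2, wordInv, ← List.map_reverse, List.head?_map,
    List.head?_reverse]

lemma head?_dropLast_append {G : Type*} [Group G] {x : List G} {b : G}
    (h : x.getLast? = some b) (l : List G) :
    (x.dropLast ++ b :: l).head? = x.head? := by
  rcases x with _ | ⟨a, x⟩
  · simp at h
  · rcases x with _ | ⟨c, x⟩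
    · simp at h; subst h; simp
    · simp

lemma getLast?_some_of_ne_nil {G : Type*} (t : List G) (h : t ≠ []) :
    ∃ b, t.getLast? = some b := by
  rcases t with _ | ⟨a, t⟩
  · exact absurd rfl h
  · exact ⟨(a :: t).getLast (by simp), List.getLast?_eq_getLast _⟩

lemma rep_eq_aux {G : Type*} [Group G] {c c' : G} (hc : c ≠ 1) (hc' : c' ≠ 1) :
    ∀ (k k' : ℕ) (y y' : List G), y.head? = some c → y'.head? = some c' →
      List.replicate k (1:G) ++ y = List.replicate k' (1:G) ++ y' → k = k' := by
  intro k
  induction k with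
  | zero =>
    intro k' y y' hy hy' h
    cases k' with
    | zero => rfl
    | succ m =>
      exfalso
      simp only [List.replicate_succ, List.replicate_zero, List.cons_append,
        List.nil_append] at h
      rw [h] at hy
      simp only [List.head?_cons, Option.some.injEq] at hy
      exact hc hy.symm
  | succ n ih =>
    intro k' y y' hy hy' h
    cases k' with
    | zero =>
      exfalso
      simp only [List.replicate_succ, List.replicate_zero, List.cons_append,
        List.nil_append] at h
      rw [← h] at hy'
      simp only [List.head?_cons, Option.some.injEq] at hy'
      exact hc' hy'.symm
    | succ m =>
      simp only [List.replicate_succ, List.cons_append, List.cons.injEq, true_and] at h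
      exact congrArg Nat.succ (ih m y y' hy hy' h)

lemma stepA {G : Type*} [Group G] {g₀ : G} {t : ℕ} (ht : 1 ≤ t) {y γ : List G} {c : G}
    (hy : y.head? = some c) (hc : c ≠ 1)
    (h : inProd (g₀ :: List.replicate t (1:G)) y γ) :
    ∃ k, (k = t ∨ k + 1 = t) ∧ γ = g₀ :: (List.replicate k (1:G) ++ y) := by
  obtain ⟨n, rfl⟩ : ∃ n, t = n + 1 := ⟨t - 1, by omega⟩
  obtain ⟨u, t', v, hx, hyv, hγ⟩ := h
  have hrep : g₀ :: List.replicate (n+1) (1:G) = (g₀ :: List.replicate n (1:G)) ++ [1] := by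
    rw [List.replicate_succ']; rfl
  have hlast : (g₀ :: List.replicate (n+1) (1:G)).getLast? = some 1 := by
    rw [hrep, List.getLast?_concat]
  have ht' : t' = [] := by
    by_contra h0
    obtain ⟨b, hb⟩ := getLast?_some_of_ne_nil t' h0
    rw [hx, List.getLast?_append, hb] at hlast
    simp at hlast
    subst hlast
    have hh := head?_wordInv_append h0 v
    rw [hb] at hh
    rw [hyv, hh] at hy
    simp only [Option.map_some, inv_one, Option.some.injEq] at hy
    exact hc hy.symm
  subst ht'
  rw [List.append_nil] at hx
  subst hx
  have hyv' : y = v := by simpa [wordInv] using hyv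
  subst hyv'
  rcases hγ with rfl | ⟨hu, hv, rfl⟩
  · exact ⟨n + 1, Or.inl rfl, by simp⟩
  · rcases y with _ | ⟨c₀, y'⟩
    · exact absurd rfl hv
    · have hc₀ : c₀ = c := by simpa using hy
      subst hc₀
      rw [fuse_cons hlast, one_mul]
      refine ⟨n, Or.inr rfl, ?_⟩
      rw [show (g₀ :: List.replicate (n+1) (1:G)).dropLast = g₀ :: List.replicate n 1 by
        rw [hrep, List.dropLast_concat]]
      simp

lemma stepB {G : Type*} [Group G] {g₀ : G} (hg₀ : g₀ ≠ 1) {t : ℕ} (ht : 1 ≤ t)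
    {γ₁ γ : List G} {a d : G} (h1 : γ₁.head? = some a) (ha : a ≠ 1)
    (h2 : γ₁.getLast? = some d) (hd : d ≠ 1)
    (h : inProd γ₁ (wordInv (g₀ :: List.replicate t (1:G))) γ) :
    (∃ a', γ.head? = some a' ∧ a' ≠ 1) ∧ (∃ b', γ.getLast? = some b' ∧ b' ≠ 1) := by
  obtain ⟨n, rfl⟩ : ∃ n, t = n + 1 := ⟨t - 1, by omega⟩
  have hw : wordInv (g₀ :: List.replicate (n+1) (1:G))
      = List.replicate (n+1) (1:G) ++ [g₀⁻¹] := by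
    simp [wordInv]
  obtain ⟨u, t', v, hx, hyv, hγ⟩ := h
  have hγ₁ne : γ₁ ≠ [] := by rintro rfl; simp at h1
  have ht' : t' = [] := by
    by_contra h0
    obtain ⟨b, hb⟩ := getLast?_some_of_ne_nil t' h0
    have hbd : b = d := by
      rw [hx, List.getLast?_append, hb] at h2
      simpa using h2
    have hh := head?_wordInv_append h0 v
    rw [hb, ← hyv, hw] at hh
    rw [List.replicate_succ] at hh
    simp only [List.cons_append, List.head?_cons, Option.map_some, Option.some.injEq] at hh
    exact hd (by rw [← hbd, ← inv_inv b, ← hh, inv_one])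
  subst ht'
  rw [List.append_nil] at hx
  subst hx
  have hv : v = List.replicate (n+1) (1:G) ++ [g₀⁻¹] := by
    have := hyv
    rw [hw] at this
    simpa [wordInv] using this.symm
  subst hv
  rcases hγ with rfl | ⟨hu, hv, rfl⟩
  · constructor
    · exact ⟨a, by rw [List.head?_append_of_ne_nil _ hγ₁ne]; exact h1, ha⟩
    · refine ⟨g₀⁻¹, ?_, inv_ne_one.mpr hg₀⟩
      rw [show γ₁ ++ (List.replicate (n+1) (1:G) ++ [g₀⁻¹])
          = (γ₁ ++ List.replicate (n+1) (1:G)) ++ [g₀⁻¹] by simp,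
        List.getLast?_concat]
  · rw [show List.replicate (n+1) (1:G) ++ [g₀⁻¹] = 1 :: (List.replicate n (1:G) ++ [g₀⁻¹]) by
      rw [List.replicate_succ]; rfl]
    rw [fuse_cons h2, mul_one]
    constructor
    · exact ⟨a, by rw [head?_dropLast_append h2]; exact h1, ha⟩
    · refine ⟨g₀⁻¹, ?_, inv_ne_one.mpr hg₀⟩
      rw [show γ₁.dropLast ++ d :: (List.replicate n (1:G) ++ [g₀⁻¹])
          = (γ₁.dropLast ++ d :: List.replicate n 1) ++ [g₀⁻¹] by simp,
        List.getLast?_concat]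

/-- Proposition 3.3 (1),(2): with `α_t = (g_0, e^t)` for `t ∈ {1,3,5}`:
(i) `G_2 ∘ E_1 ∩ E_1 = ∅`; (ii) the sets `{α_t} ∘ G_1`, `t ∈ {1,3,5}`, are pairwise
disjoint; (iii) `{α_t} ∘ G_2 ∘ {ᾱ_t} ⊆ G_2` for each `t ∈ {1,3,5}`. -/
theorem fusion_sets_disjointness (G : Type*) [Group G] (g₀ : G) (hg₀ : g₀ ≠ 1) :
    circ (G2 G) (E1 G) ∩ E1 G = ∅ ∧
    (∀ t ∈ ({1, 3, 5} : Set ℕ), ∀ s ∈ ({1, 3, 5} : Set ℕ), t ≠ s →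
      circ {g₀ :: List.replicate t (1 : G)} (G1 G) ∩
        circ {g₀ :: List.replicate s (1 : G)} (G1 G) = ∅) ∧
    (∀ t ∈ ({1, 3, 5} : Set ℕ),
      circ (circ {g₀ :: List.replicate t (1 : G)} (G2 G))
        {wordInv (g₀ :: List.replicate t (1 : G))} ⊆ G2 G) := by
  refine ⟨?_, ?_, ?_⟩
  · -- Part (i)
    rw [Set.eq_empty_iff_forall_notMem]
    rintro γ ⟨⟨x, hx, y, hy, u, t', v, hxd, hyd, hγ⟩, hγE⟩
    obtain ⟨⟨a, ha, ha1⟩, ⟨b, hb, hb1⟩⟩ := hx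
    have hxne : x ≠ [] := by rintro rfl; simp at ha
    have ht' : t' = [] := by
      by_contra h0
      obtain ⟨bb, hbb⟩ := getLast?_some_of_ne_nil t' h0
      have hbbb : bb = b := by
        rw [hxd, List.getLast?_append, hbb] at hb
        simpa using hb
      have hh := head?_wordInv_append h0 v
      rw [hbb, ← hyd] at hh
      rcases hy with rfl | h'
      · simp at hh
      · rw [h'] at hh
        simp only [Option.map_some, Option.some.injEq] at hh
        exact hb1 (by rw [← hbbb, ← inv_inv bb, ← hh, inv_one])
    subst ht'
    rw [List.append_nil] at hxd
    subst hxd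
    have hyd' : y = v := by simpa [wordInv] using hyd
    subst hyd'
    have hγhead : ∃ h, γ.head? = some h ∧ h ≠ 1 := by
      rcases hγ with rfl | ⟨hu, hv, rfl⟩
      · exact ⟨a, by rw [List.head?_append_of_ne_nil _ hxne]; exact ha, ha1⟩
      · rcases y with _ | ⟨c, y'⟩
        · exact absurd rfl hv
        · have hc : c = 1 := by
            rcases hy with h' | h'
            · simp at h'
            · simpa using h'
          subst hc
          rw [fuse_cons hb, mul_one]
          exact ⟨a, by rw [head?_dropLast_append hb]; exact ha, ha1⟩
    obtain ⟨h, hh, hh1⟩ := hγhead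
    rcases hγE with rfl | h'
    · simp at hh
    · rw [h'] at hh
      exact hh1 (by simpa using hh.symm)
  · -- Part (ii)
    rintro t htm s hsm hts
    rw [Set.eq_empty_iff_forall_notMem]
    rintro γ ⟨⟨x, hx, y, hy, hp⟩, ⟨x', hx', y', hy', hp'⟩⟩
    simp only [Set.mem_singleton_iff] at hx hx'
    subst hx; subst hx'
    simp only [Set.mem_insert_iff, Set.mem_singleton_iff] at htm hsm
    have ht1 : 1 ≤ t := by omega
    have hs1 : 1 ≤ s := by omega
    obtain ⟨c, hc, hc1⟩ := hy
    obtain ⟨c', hc', hc1'⟩ := hy'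
    obtain ⟨k, hk, hγk⟩ := stepA ht1 hc hc1 hp
    obtain ⟨k', hk', hγk'⟩ := stepA hs1 hc' hc1' hp'
    rw [hγk] at hγk'
    simp only [List.cons.injEq, true_and] at hγk'
    have := rep_eq_aux hc1 hc1' k k' y y' hc hc' hγk'
    omega
  · -- Part (iii)
    rintro t htm γ ⟨γ₁, hγ₁, y, hy, hp⟩
    simp only [Set.mem_singleton_iff] at hy
    subst hy
    simp only [Set.mem_insert_iff, Set.mem_singleton_iff] at htm
    have ht1 : 1 ≤ t := by omega
    obtain ⟨α, hα, z, hz, hp1⟩ := hγ₁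
    simp only [Set.mem_singleton_iff] at hα
    subst hα
    obtain ⟨⟨c, hc, hc1⟩, ⟨d, hd, hd1⟩⟩ := hz
    obtain ⟨k, hk, rfl⟩ := stepA ht1 hc hc1 hp1
    have h1 : (g₀ :: (List.replicate k (1:G) ++ z)).head? = some g₀ := rfl
    have h2 : (g₀ :: (List.replicate k (1:G) ++ z)).getLast? = some d := by
      rw [show g₀ :: (List.replicate k (1:G) ++ z) = (g₀ :: List.replicate k 1) ++ z by simp,
        List.getLast?_append, hd]
      simp
    exact stepB hg₀ ht1 h1 hg₀ h2 hd1 hp
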